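/- Suppose for every function f mapping each concept C in a finite set C to one of its completions (a type containing C), the image f[C] has an ALC(Σ) separator Sep_f. Define Sep(C) as the disjunction over completions t of C of the conjunction over all f with f(C) = t of Sep_f(C). Then Sep is an ALC(Σ) separator for C: O ⊨ C ⊑ Sep(C) for all C ∈ C, and O ⊨ ⊓_{C∈C} Sep(C) ⊑ ⊥. -/

import Mathlib

namespace DL

/-- ALCQ concepts over concept names `Cn` and role names `Rn`. -/
inductive Concept (Cn Rn : Type) : Type
  | top : Concept Cn Rn
  | atom : Cn → Concept Cn Rn
  | neg : Concept Cn Rn → Concept Cn Rn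
  | conj : Concept Cn Rn → Concept Cn Rn → Concept Cn Rn
  | atLeast : ℕ → Rn → Concept Cn Rn → Concept Cn Rn
  deriving DecidableEq

namespace Concept
variable {Cn Rn : Type}

/-- ∃r.C -/
def ex (r : Rn) (c : Concept Cn Rn) : Concept Cn Rn := atLeast 1 r c
/-- ∀r.C -/
def all (r : Rn) (c : Concept Cn Rn) : Concept Cn Rn := neg (atLeast 1 r (neg c))
def disj (c d : Concept Cn Rn) : Concept Cn Rn := neg (conj (neg c) (neg d))
def impl (c d : Concept Cn Rn) : Concept Cn Rn := disj (neg c) d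
def bot : Concept Cn Rn := neg top

/-- an ALC concept: all number restrictions are existential restrictions. -/
def isALC : Concept Cn Rn → Prop
  | top => True
  | atom _ => True
  | neg c => c.isALC
  | conj c d => c.isALC ∧ d.isALC
  | atLeast n _ c => n = 1 ∧ c.isALC

/-- size (number of symbols) of a concept. -/
def size : Concept Cn Rn → ℕ
  | top => 1
  | atom _ => 1
  | neg c => c.size + 1
  | conj c d => c.size + d.size + 1
  | atLeast n _ c => c.size + n + 2

/-- role depth of a concept. -/
def roleDepth : Concept Cn Rn → ℕ
  | top => 0
  | atom _ => 0
  | neg c => c.roleDepth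
  | conj c d => max c.roleDepth d.roleDepth
  | atLeast _ _ c => c.roleDepth + 1

end Concept

/-- big conjunction of a list of concepts -/
def bigConj {Cn Rn : Type} : List (Concept Cn Rn) → Concept Cn Rn
  | [] => Concept.top
  | c :: l => Concept.conj c (bigConj l)

/-- big disjunction of a list of concepts -/
def bigDisj {Cn Rn : Type} (l : List (Concept Cn Rn)) : Concept Cn Rn :=
  Concept.neg (bigConj (l.map Concept.neg))

/-- a signature: a set of concept names and a set of role names. -/
structure Sig (Cn Rn : Type) where
  cs : Set Cn
  rs : Set Rn

/-- the concept uses only symbols from the signature σ. -/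
def Concept.inSig {Cn Rn : Type} (σ : Sig Cn Rn) : Concept Cn Rn → Prop
  | .top => True
  | .atom A => A ∈ σ.cs
  | .neg c => c.inSig σ
  | .conj c d => c.inSig σ ∧ d.inSig σ
  | .atLeast _ r c => r ∈ σ.rs ∧ c.inSig σ

/-- an interpretation I = (Δ^I, ·^I). -/
structure Interp (Cn Rn : Type) : Type 1 where
  Dom : Type
  atomI : Cn → Set Dom
  roleI : Rn → Set (Dom × Dom)

/-- extension C^I of a concept in an interpretation. -/
def Concept.sem {Cn Rn : Type} (I : Interp Cn Rn) : Concept Cn Rn → Set I.Dom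
  | .top => Set.univ
  | .atom A => I.atomI A
  | .neg c => (c.sem I)ᶜ
  | .conj c d => c.sem I ∩ d.sem I
  | .atLeast n r c =>
      {x | ∃ s : Finset I.Dom, n ≤ s.card ∧ ∀ e ∈ s, (x, e) ∈ I.roleI r ∧ e ∈ c.sem I}

/-- an ontology: concept inclusions and role inclusions. -/
structure Ontology (Cn Rn : Type) where
  cis : Set (Concept Cn Rn × Concept Cn Rn)
  ris : Set (Rn × Rn)

def Interp.isModel {Cn Rn : Type} (I : Interp Cn Rn) (O : Ontology Cn Rn) : Prop :=
  (∀ p ∈ O.cis, Concept.sem I p.1 ⊆ Concept.sem I p.2) ∧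
  (∀ p ∈ O.ris, I.roleI p.1 ⊆ I.roleI p.2)

/-- O ⊨ c ⊑ d -/
def entails {Cn Rn : Type} (O : Ontology Cn Rn) (c d : Concept Cn Rn) : Prop :=
  ∀ I : Interp Cn Rn, I.isModel O → c.sem I ⊆ d.sem I

/-- O ⊨ r ⊑ s for role names -/
def roleEnt {Cn Rn : Type} (O : Ontology Cn Rn) (r s : Rn) : Prop :=
  ∀ I : Interp Cn Rn, I.isModel O → I.roleI r ⊆ I.roleI s

/-- Z is a Σ-bisimulation between I and J. -/
def IsBisim {Cn Rn : Type} (σ : Sig Cn Rn) (I J : Interp Cn Rn)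
    (Z : Set (I.Dom × J.Dom)) : Prop :=
  ∀ d e, (d, e) ∈ Z →
    (∀ A ∈ σ.cs, d ∈ I.atomI A ↔ e ∈ J.atomI A) ∧
    (∀ r ∈ σ.rs, ∀ d', (d, d') ∈ I.roleI r → ∃ e', (e, e') ∈ J.roleI r ∧ (d', e') ∈ Z) ∧
    (∀ r ∈ σ.rs, ∀ e', (e, e') ∈ J.roleI r → ∃ d', (d, d') ∈ I.roleI r ∧ (d', e') ∈ Z)

/-- pointed interpretations are Σ-bisimilar. -/
def Bisimilar {Cn Rn : Type} (σ : Sig Cn Rn) (I : Interp Cn Rn) (d : I.Dom)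
    (J : Interp Cn Rn) (e : J.Dom) : Prop :=
  ∃ Z, IsBisim σ I J Z ∧ (d, e) ∈ Z

/-- E is an ALC(Σ) interpolant for O ⊨ c ⊑ d. -/
def IsInterpolant {Cn Rn : Type} (O : Ontology Cn Rn) (σ : Sig Cn Rn)
    (c d E : Concept Cn Rn) : Prop :=
  E.isALC ∧ E.inSig σ ∧ entails O c E ∧ entails O E d

/-- c and d are jointly ∼_{ALC,Σ}-consistent under O. -/
def JointlyConsistent {Cn Rn : Type} (O : Ontology Cn Rn) (σ : Sig Cn Rn)
    (c d : Concept Cn Rn) : Prop :=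
  ∃ (I₁ I₂ : Interp Cn Rn) (d₁ : I₁.Dom) (d₂ : I₂.Dom),
    I₁.isModel O ∧ I₂.isModel O ∧ d₁ ∈ c.sem I₁ ∧ d₂ ∈ d.sem I₂ ∧ Bisimilar σ I₁ d₁ I₂ d₂

/-- semantics of a set of concepts viewed as conjunction. -/
def setSem {Cn Rn : Type} (I : Interp Cn Rn) (t : Set (Concept Cn Rn)) : Set I.Dom :=
  {x | ∀ c ∈ t, x ∈ c.sem I}

/-- the type of an element: concepts from sub true at x. -/
def tpSet {Cn Rn : Type} (I : Interp Cn Rn) (sub : Set (Concept Cn Rn)) (x : I.Dom) :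
    Set (Concept Cn Rn) :=
  {c | c ∈ sub ∧ x ∈ c.sem I}

/-- t is a type for O (realizable subset of sub). -/
def IsTypeFor {Cn Rn : Type} (O : Ontology Cn Rn) (sub : Set (Concept Cn Rn))
    (t : Set (Concept Cn Rn)) : Prop :=
  ∃ (I : Interp Cn Rn) (x : I.Dom), I.isModel O ∧ t = tpSet I sub x

/-- t_{/r} = {C : ∀r.C ∈ t} -/
def slash {Cn Rn : Type} (t : Set (Concept Cn Rn)) (r : Rn) : Set (Concept Cn Rn) :=
  {c | Concept.all r c ∈ t}

/-- t ⤳_r t' -/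
def typeStep {Cn Rn : Type} (r : Rn) (t t' : Set (Concept Cn Rn)) : Prop :=
  slash t r ⊆ t'

/-- T ⤳_s T' for mosaics -/
def mosaicStep {Cn Rn : Type} (s : Rn) (T T' : Set (Set (Concept Cn Rn))) : Prop :=
  ∀ t ∈ T, ∃ t' ∈ T', typeStep s t t'

/-- O ⊨ t ⊑ D for a type t viewed as conjunction. -/
def entailsSet {Cn Rn : Type} (O : Ontology Cn Rn) (t : Set (Concept Cn Rn))
    (D : Concept Cn Rn) : Prop :=
  ∀ I : Interp Cn Rn, I.isModel O → setSem I t ⊆ D.sem I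

/-- iterated exponential -/
def Tower : ℕ → ℕ
  | 0 => 1
  | n + 1 => 2 ^ Tower n

/-- t is realizable under O (viewed as a conjunction). -/
def RealizableF {Cn Rn : Type} (O : Ontology Cn Rn) (t : Finset (Concept Cn Rn)) : Prop :=
  ∃ (I : Interp Cn Rn) (x : I.Dom), I.isModel O ∧ ∀ c ∈ t, x ∈ c.sem I

open Classical in
/-- the completions of c: realizable subsets of sub containing c. -/
noncomputable def completionsF {Cn Rn : Type} [DecidableEq Cn] [DecidableEq Rn]
    (O : Ontology Cn Rn) (sub : Finset (Concept Cn Rn)) (c : Concept Cn Rn) :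
    Finset (Finset (Concept Cn Rn)) :=
  sub.powerset.filter (fun t => c ∈ t ∧ RealizableF O t)

/-- functions from 𝒞 to subsets of sub (candidate completion choices). -/
abbrev CpFun {Cn Rn : Type} [DecidableEq Cn] [DecidableEq Rn]
    (𝒞 sub : Finset (Concept Cn Rn)) : Type :=
  {c // c ∈ 𝒞} → {t // t ∈ sub.powerset}

open Classical in
/-- cp(𝒞): functions mapping each c ∈ 𝒞 to one of its completions. -/
noncomputable def cpSet {Cn Rn : Type} [DecidableEq Cn] [DecidableEq Rn]
    (O : Ontology Cn Rn) (𝒞 sub : Finset (Concept Cn Rn)) : Finset (CpFun 𝒞 sub) :=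
  Finset.univ.filter (fun f => ∀ c : {c // c ∈ 𝒞}, (f c).1 ∈ completionsF O sub c.1)

open Classical in
/-- Sep(C): disjunction over completions t of C of the conjunction over all f ∈ cp(𝒞)
with f(C) = t of Sep_f(C). -/
noncomputable def sepComb {Cn Rn : Type} [DecidableEq Cn] [DecidableEq Rn]
    (O : Ontology Cn Rn) (𝒞 sub : Finset (Concept Cn Rn))
    (Sepf : CpFun 𝒞 sub → Concept Cn Rn → Concept Cn Rn)
    (c : {c // c ∈ 𝒞}) : Concept Cn Rn :=
  bigDisj ((completionsF O sub c.1).toList.map (fun t =>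
    bigConj (((cpSet O 𝒞 sub).filter (fun f => (f c).1 = t)).toList.map
      (fun f => Sepf f c.1))))

lemma bigConj_sem {Cn Rn : Type} (I : Interp Cn Rn) (l : List (Concept Cn Rn)) (x : I.Dom) :
    x ∈ (bigConj l).sem I ↔ ∀ c ∈ l, x ∈ c.sem I := by
  induction l with
  | nil => simp [bigConj, Concept.sem]
  | cons c l ih => simp [bigConj, Concept.sem, ih]

lemma bigDisj_sem {Cn Rn : Type} (I : Interp Cn Rn) (l : List (Concept Cn Rn)) (x : I.Dom) :
    x ∈ (bigDisj l).sem I ↔ ∃ c ∈ l, x ∈ c.sem I := by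
  simp only [bigDisj, Concept.sem, Set.mem_compl_iff, bigConj_sem]
  push_neg
  constructor
  · rintro ⟨c, hc, hx⟩
    rcases List.mem_map.mp hc with ⟨d, hd, rfl⟩
    exact ⟨d, hd, by simpa [Concept.sem] using hx⟩
  · rintro ⟨d, hd, hx⟩
    exact ⟨Concept.neg d, List.mem_map.mpr ⟨d, hd, rfl⟩, by simpa [Concept.sem] using hx⟩

lemma bigConj_isALC {Cn Rn : Type} {l : List (Concept Cn Rn)}
    (h : ∀ c ∈ l, c.isALC) : (bigConj l).isALC := by
  induction l with
  | nil => trivial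
  | cons c l ih =>
    exact ⟨h c (List.mem_cons_self), ih fun d hd => h d (List.mem_cons_of_mem _ hd)⟩

lemma bigDisj_isALC {Cn Rn : Type} {l : List (Concept Cn Rn)}
    (h : ∀ c ∈ l, c.isALC) : (bigDisj l).isALC := by
  show (bigConj (l.map Concept.neg)).isALC
  refine bigConj_isALC fun c hc => ?_
  rcases List.mem_map.mp hc with ⟨d, hd, rfl⟩
  exact h d hd

lemma bigConj_inSig {Cn Rn : Type} {σ : Sig Cn Rn} {l : List (Concept Cn Rn)}
    (h : ∀ c ∈ l, c.inSig σ) : (bigConj l).inSig σ := by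
  induction l with
  | nil => trivial
  | cons c l ih =>
    exact ⟨h c (List.mem_cons_self), ih fun d hd => h d (List.mem_cons_of_mem _ hd)⟩

lemma bigDisj_inSig {Cn Rn : Type} {σ : Sig Cn Rn} {l : List (Concept Cn Rn)}
    (h : ∀ c ∈ l, c.inSig σ) : (bigDisj l).inSig σ := by
  show (bigConj (l.map Concept.neg)).inSig σ
  refine bigConj_inSig fun c hc => ?_
  rcases List.mem_map.mp hc with ⟨d, hd, rfl⟩
  exact h d hd

/-- Hard direction of the completion lemma: if every cp-image has an ALC(Σ) separator,
then the combination sepComb is an ALC(Σ) separator for 𝒞. -/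
theorem completion_lemma_hard {Cn Rn : Type} [DecidableEq Cn] [DecidableEq Rn]
    (O : Ontology Cn Rn) (σ : Sig Cn Rn)
    (𝒞 sub : Finset (Concept Cn Rn)) (h𝒞 : 𝒞 ⊆ sub)
    (Sepf : CpFun 𝒞 sub → Concept Cn Rn → Concept Cn Rn)
    (hALC : ∀ f ∈ cpSet O 𝒞 sub, ∀ c ∈ 𝒞, (Sepf f c).isALC ∧ (Sepf f c).inSig σ)
    (hSep1 : ∀ f ∈ cpSet O 𝒞 sub, ∀ c : {c // c ∈ 𝒞}, ∀ I : Interp Cn Rn,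
      I.isModel O → setSem I (↑(f c).1 : Set (Concept Cn Rn)) ⊆ (Sepf f c.1).sem I)
    (hSep2 : ∀ f ∈ cpSet O 𝒞 sub, ∀ I : Interp Cn Rn, I.isModel O →
      {x : I.Dom | ∀ c : {c // c ∈ 𝒞}, x ∈ (Sepf f c.1).sem I} = ∅) :
    (∀ c : {c // c ∈ 𝒞},
      (sepComb O 𝒞 sub Sepf c).isALC ∧ (sepComb O 𝒞 sub Sepf c).inSig σ ∧
      entails O c.1 (sepComb O 𝒞 sub Sepf c)) ∧
    (∀ I : Interp Cn Rn, I.isModel O →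
      {x : I.Dom | ∀ c : {c // c ∈ 𝒞}, x ∈ (sepComb O 𝒞 sub Sepf c).sem I} = ∅) := by
  classical
  have hmemList : ∀ (c : {c // c ∈ 𝒞}) (t : Finset (Concept Cn Rn)),
      t ∈ completionsF O sub c.1 →
      bigConj (((cpSet O 𝒞 sub).filter (fun f => (f c).1 = t)).toList.map
        (fun f => Sepf f c.1)) ∈
      ((completionsF O sub c.1).toList.map (fun t =>
        bigConj (((cpSet O 𝒞 sub).filter (fun f => (f c).1 = t)).toList.map
          (fun f => Sepf f c.1)))) := by
    intro c t ht
    exact List.mem_map.mpr ⟨t, (Finset.mem_toList).mpr ht, rfl⟩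
  constructor
  · intro c
    have hALC' : ∀ f ∈ cpSet O 𝒞 sub, (Sepf f c.1).isALC ∧ (Sepf f c.1).inSig σ :=
      fun f hf => hALC f hf c.1 c.2
    refine ⟨?_, ?_, ?_⟩
    · refine bigDisj_isALC fun d hd => ?_
      rcases List.mem_map.mp hd with ⟨t, _, rfl⟩
      refine bigConj_isALC fun e he => ?_
      rcases List.mem_map.mp he with ⟨f, hf, rfl⟩
      exact (hALC' f (Finset.filter_subset _ _ ((Finset.mem_toList).mp hf))).1
    · refine bigDisj_inSig fun d hd => ?_
      rcases List.mem_map.mp hd with ⟨t, _, rfl⟩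
      refine bigConj_inSig fun e he => ?_
      rcases List.mem_map.mp he with ⟨f, hf, rfl⟩
      exact (hALC' f (Finset.filter_subset _ _ ((Finset.mem_toList).mp hf))).2
    · intro I hI x hx
      set t : Finset (Concept Cn Rn) := sub.filter (fun d => x ∈ d.sem I) with htdef
      have ht : t ∈ completionsF O sub c.1 := by
        simp only [completionsF, Finset.mem_filter, Finset.mem_powerset]
        refine ⟨Finset.filter_subset _ _, Finset.mem_filter.mpr ⟨h𝒞 c.2, hx⟩,
          I, x, hI, fun d hd => (Finset.mem_filter.mp hd).2⟩
      rw [sepComb]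
      refine (bigDisj_sem I _ x).mpr ⟨_, hmemList c t ht, ?_⟩
      refine (bigConj_sem I _ x).mpr fun e he => ?_
      rcases List.mem_map.mp he with ⟨f, hf, rfl⟩
      have hf' := (Finset.mem_toList).mp hf
      rw [Finset.mem_filter] at hf'
      refine hSep1 f hf'.1 c I hI ?_
      rw [hf'.2]
      intro d hd
      exact (Finset.mem_filter.mp hd).2
  · intro I hI
    by_contra hne
    rcases Set.nonempty_iff_ne_empty.mpr hne with ⟨x, hx⟩
    simp only [Set.mem_setOf_eq] at hx
    have hx' : ∀ c : {c // c ∈ 𝒞}, ∃ t ∈ completionsF O sub c.1,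
        x ∈ (bigConj (((cpSet O 𝒞 sub).filter (fun f => (f c).1 = t)).toList.map
          (fun f => Sepf f c.1))).sem I := by
      intro c
      have := hx c
      rw [sepComb] at this
      rcases (bigDisj_sem I _ x).mp this with ⟨e, he, hxe⟩
      rcases List.mem_map.mp he with ⟨t, ht, rfl⟩
      exact ⟨t, (Finset.mem_toList).mp ht, hxe⟩
    choose t ht hxt using hx'
    have htsub : ∀ c, t c ∈ sub.powerset := by
      intro c
      have := ht c
      simp only [completionsF, Finset.mem_filter] at this
      exact this.1
    set f₀ : CpFun 𝒞 sub := fun c => ⟨t c, htsub c⟩ with hf₀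
    have hf₀mem : f₀ ∈ cpSet O 𝒞 sub := by
      simp only [cpSet, Finset.mem_filter, Finset.mem_univ, true_and]
      exact ht
    have hall : ∀ c : {c // c ∈ 𝒞}, x ∈ (Sepf f₀ c.1).sem I := by
      intro c
      have hmem : f₀ ∈ (cpSet O 𝒞 sub).filter (fun f => (f c).1 = t c) :=
        Finset.mem_filter.mpr ⟨hf₀mem, rfl⟩
      have := (bigConj_sem I _ x).mp (hxt c) (Sepf f₀ c.1)
        (List.mem_map.mpr ⟨f₀, (Finset.mem_toList).mpr hmem, rfl⟩)
      exact this
    have := hSep2 f₀ hf₀mem I hI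
    rw [Set.eq_empty_iff_forall_notMem] at this
    exact this x hall
end DL
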